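/- Let s ≥ 0, l ≥ 0 and suppose f satisfies ‖Λ^{-s}f‖_{L²} ≤ K for some K > 0. Then ‖∇^{l+1}f‖_{L²}² ≥ C K^{-2/(l+s)} (‖∇^l f‖_{L²}²)^{1+1/(l+s)}, where C depends only on l and s. -/

import Mathlib

open MeasureTheory FourierTransform

open scoped ENNReal NNReal

abbrev E3 : Type := EuclideanSpace ℝ (Fin 3)

/-- **Rearranged negative-Sobolev interpolation.** If `‖Λ^{-s} f‖_{L²} ≤ K`, then
`‖∇^{l+1} f‖_{L²}² ≥ C K^{-2/(l+s)} (‖∇^l f‖_{L²}²)^{1+1/(l+s)}`, stated on the Fourier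
side for Schwartz functions on ℝ³. -/
theorem stmt5 (l s : ℝ) (hl : 0 ≤ l) (hs : 0 ≤ s) (hls : 0 < l + s) :
    ∃ C > 0, ∀ (f : SchwartzMap E3 ℂ) (K : ℝ), 0 < K →
      eLpNorm (fun ξ : E3 => (‖ξ‖ ^ (-s) : ℝ) • 𝓕 (⇑f) ξ) 2 volume ≤ ENNReal.ofReal K →
      ENNReal.ofReal (C * K ^ (-2 / (l + s))) *
          (eLpNorm (fun ξ : E3 => (‖ξ‖ ^ l : ℝ) • 𝓕 (⇑f) ξ) 2 volume ^ (2 : ℝ))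
            ^ (1 + 1 / (l + s)) ≤
        eLpNorm (fun ξ : E3 => (‖ξ‖ ^ (l + 1) : ℝ) • 𝓕 (⇑f) ξ) 2 volume ^ (2 : ℝ) := by
  refine ⟨1, one_pos, fun f K hK hZK => ?_⟩
  set F : E3 → ℂ := 𝓕 ⇑f with hFdef
  have hFcont : Continuous F := by
    rw [hFdef, ← SchwartzMap.fourier_coe, ← SchwartzMap.fourierTransformCLM_apply (𝕜 := ℂ)]
    exact (SchwartzMap.fourierTransformCLM ℂ f).continuous
  have hd : (0:ℝ) < l + 1 + s := by linarith
  set θ : ℝ := (l + s) / (l + 1 + s) with hθdef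
  have hθ : 0 < θ := div_pos hls hd
  have hθ1 : θ < 1 := by
    rw [hθdef, div_lt_one hd]; linarith
  -- basic objects
  set Φ : ℝ → E3 → ℝ≥0∞ := fun a ξ => ((‖(‖ξ‖ ^ a : ℝ) • F ξ‖₊ : ℝ≥0∞)) ^ (2:ℝ) with hΦdef
  have hmeas : ∀ a : ℝ, Measurable (Φ a) := by
    intro a
    exact (((measurable_norm.pow_const a).smul hFcont.measurable).nnnorm.coe_nnreal_ennreal).pow_const _
  -- pointwise factorization off 0
  have hpt : ∀ (a : ℝ) (ξ : E3), ξ ≠ 0 →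
      Φ a ξ = (ENNReal.ofReal ‖ξ‖) ^ (a * 2) * ((‖F ξ‖₊ : ℝ≥0∞)) ^ (2:ℝ) := by
    intro a ξ hξ
    have hξpos : (0:ℝ) < ‖ξ‖ := norm_pos_iff.2 hξ
    have h1 : ((‖(‖ξ‖ ^ a : ℝ) • F ξ‖₊ : ℝ≥0∞)) =
        (ENNReal.ofReal ‖ξ‖) ^ a * (‖F ξ‖₊ : ℝ≥0∞) := by
      rw [nnnorm_smul, ENNReal.coe_mul]
      congr 1
      rw [← enorm_eq_nnnorm, ← ofReal_norm, Real.norm_eq_abs,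
        abs_of_nonneg (Real.rpow_nonneg hξpos.le a), ENNReal.ofReal_rpow_of_pos hξpos]
    rw [hΦdef]
    simp only
    rw [h1, ENNReal.mul_rpow_of_nonneg _ _ (by norm_num : (0:ℝ) ≤ 2), ← ENNReal.rpow_mul]
  -- L² norms squared as integrals
  have hsq : ∀ a : ℝ,
      eLpNorm (fun ξ : E3 => (‖ξ‖ ^ a : ℝ) • F ξ) 2 volume ^ (2:ℝ) = ∫⁻ ξ, Φ a ξ := by
    intro a
    rw [eLpNorm_eq_lintegral_rpow_enorm_toReal (by norm_num) (by norm_num), ← ENNReal.rpow_mul]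
    norm_num [hΦdef, enorm_eq_nnnorm]
  -- Hölder
  have hHolder : (∫⁻ ξ, Φ l ξ) ≤ (∫⁻ ξ, Φ (l+1) ξ) ^ θ * (∫⁻ ξ, Φ (-s) ξ) ^ (1 - θ) := by
    have hpq : (1/θ).HolderConjugate (1/(1-θ)) := by
      constructor
      · simp only [one_div, inv_inv, inv_one]; ring
      · positivity
      · apply div_pos one_pos; linarith
    have hu : AEMeasurable (fun ξ => Φ (l+1) ξ ^ θ) volume :=
      ((hmeas (l+1)).pow_const θ).aemeasurable
    have hv : AEMeasurable (fun ξ => Φ (-s) ξ ^ (1-θ)) volume :=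
      ((hmeas (-s)).pow_const (1-θ)).aemeasurable
    have key := ENNReal.lintegral_mul_le_Lp_mul_Lq volume hpq hu hv
    have e1 : ∀ ξ, (fun ξ => Φ (l+1) ξ ^ θ) ξ ^ (1/θ) = Φ (l+1) ξ := by
      intro ξ; rw [← ENNReal.rpow_mul, mul_one_div_cancel hθ.ne', ENNReal.rpow_one]
    have e2 : ∀ ξ, (fun ξ => Φ (-s) ξ ^ (1-θ)) ξ ^ (1/(1-θ)) = Φ (-s) ξ := by
      intro ξ; rw [← ENNReal.rpow_mul, mul_one_div_cancel (by linarith : (1:ℝ)-θ ≠ 0),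
        ENNReal.rpow_one]
    simp only [e1, e2, one_div_one_div] at key
    -- a.e. equality of LHS
    have hae : (fun ξ => Φ l ξ) =ᶠ[ae volume]
        fun ξ => Φ (l+1) ξ ^ θ * Φ (-s) ξ ^ (1-θ) := by
      have h0 : (volume : Measure E3) {0} = 0 := measure_singleton 0
      filter_upwards [compl_mem_ae_iff.2 h0] with ξ hξ
      have hξ0 : ξ ≠ 0 := hξ
      have hξpos : (0:ℝ) < ‖ξ‖ := norm_pos_iff.2 hξ0
      have hx0 : ENNReal.ofReal ‖ξ‖ ≠ 0 := ne_of_gt (ENNReal.ofReal_pos.2 hξpos)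
      have hxt : ENNReal.ofReal ‖ξ‖ ≠ ⊤ := ENNReal.ofReal_ne_top
      rw [hpt l ξ hξ0, hpt (l+1) ξ hξ0, hpt (-s) ξ hξ0]
      rw [ENNReal.mul_rpow_of_nonneg _ _ hθ.le,
        ENNReal.mul_rpow_of_nonneg _ _ (by linarith : (0:ℝ) ≤ 1-θ),
        ← ENNReal.rpow_mul, ← ENNReal.rpow_mul, ← ENNReal.rpow_mul, ← ENNReal.rpow_mul]
      rw [mul_mul_mul_comm, ← ENNReal.rpow_add _ _ hx0 hxt,
        ← ENNReal.rpow_add_of_nonneg _ _ (by positivity) (by nlinarith : (0:ℝ) ≤ 2*(1-θ))]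
      congr 2
      · rw [hθdef]; field_simp; ring
      · ring
    calc (∫⁻ ξ, Φ l ξ) = ∫⁻ ξ, Φ (l+1) ξ ^ θ * Φ (-s) ξ ^ (1-θ) := lintegral_congr_ae hae
      _ ≤ _ := by simpa using key
  -- assemble
  set X := eLpNorm (fun ξ : E3 => (‖ξ‖ ^ l : ℝ) • F ξ) 2 volume
  set Y := eLpNorm (fun ξ : E3 => (‖ξ‖ ^ (l+1) : ℝ) • F ξ) 2 volume
  set Z := eLpNorm (fun ξ : E3 => (‖ξ‖ ^ (-s) : ℝ) • F ξ) 2 volume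
  have hXYZ : X ^ (2:ℝ) ≤ (Y ^ (2:ℝ)) ^ θ * (Z ^ (2:ℝ)) ^ (1-θ) := by
    rw [hsq l, hsq (l+1), hsq (-s)]; exact hHolder
  set κ := ENNReal.ofReal K with hκdef
  have hκ0 : κ ≠ 0 := by simp [hκdef, ENNReal.ofReal_eq_zero, not_le, hK]
  have hκt : κ ≠ ⊤ := ENNReal.ofReal_ne_top
  have hinv : 1/θ = 1 + 1/(l+s) := by
    rw [hθdef, one_div_div]; field_simp; ring
  have hmain : (X ^ (2:ℝ)) ^ (1 + 1/(l+s)) ≤ Y ^ (2:ℝ) * κ ^ (2/(l+s)) := by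
    have h1 : (X ^ (2:ℝ)) ^ (1/θ) ≤ ((Y ^ (2:ℝ)) ^ θ * (Z ^ (2:ℝ)) ^ (1-θ)) ^ (1/θ) :=
      ENNReal.rpow_le_rpow hXYZ (by positivity)
    have h2 : ((Y ^ (2:ℝ)) ^ θ * (Z ^ (2:ℝ)) ^ (1-θ)) ^ (1/θ)
        = Y ^ (2:ℝ) * Z ^ (2/(l+s)) := by
      rw [ENNReal.mul_rpow_of_nonneg _ _ (by positivity : (0:ℝ) ≤ 1/θ)]
      congr 1
      · rw [← ENNReal.rpow_mul, mul_one_div_cancel hθ.ne', ENNReal.rpow_one]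
      · rw [← ENNReal.rpow_mul, ← ENNReal.rpow_mul]
        congr 1
        rw [hθdef]
        field_simp
        ring
    have h3 : Z ^ (2/(l+s)) ≤ κ ^ (2/(l+s)) := ENNReal.rpow_le_rpow hZK (by positivity)
    calc (X ^ (2:ℝ)) ^ (1 + 1/(l+s)) = (X ^ (2:ℝ)) ^ (1/θ) := by rw [hinv]
      _ ≤ Y ^ (2:ℝ) * Z ^ (2/(l+s)) := h1.trans_eq h2
      _ ≤ Y ^ (2:ℝ) * κ ^ (2/(l+s)) := mul_le_mul_right h3 _
  have hof : ENNReal.ofReal (1 * K ^ (-2/(l+s))) = κ ^ (-2/(l+s)) := by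
    rw [one_mul, hκdef, ENNReal.ofReal_rpow_of_pos hK]
  rw [hof]
  calc κ ^ (-2/(l+s)) * (X ^ (2:ℝ)) ^ (1 + 1/(l+s))
      ≤ κ ^ (-2/(l+s)) * (Y ^ (2:ℝ) * κ ^ (2/(l+s))) := mul_le_mul_right hmain _
    _ = Y ^ (2:ℝ) * (κ ^ (-2/(l+s)) * κ ^ (2/(l+s))) := by ring
    _ = Y ^ (2:ℝ) := by
        rw [← ENNReal.rpow_add _ _ hκ0 hκt, neg_div, neg_add_cancel, ENNReal.rpow_zero,
          mul_one]
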